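/- Let l be odd, k satisfy 2^k < l < 2^{k+1}, and let a be an integer with 1 ≤ a ≤ 2^{k+1} − l. Set j₁ = −l + 2(1 + 2^k − a) and C_{l,m} = A_{l, l + 2(m−1)}. Then for all m ≥ 1, ν₂(C_{l, 2^k(m−1)+a}) = ν₂(m) + l + k + 1 + ν₂((j₁+l−1)!) + ν₂((l−j₁)!). -/

import Mathlib

open Finset

/-- The 2-adic valuation of `A_{l,n}`, given by `ν₂(A_{l,n}) = l + Σ_{j=-l+1}^{l} ν₂(n+j)`. -/
noncomputable def nuA (l : ℕ) (n : ℤ) : ℕ :=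
  l + ∑ j ∈ Finset.Icc (-(l : ℤ) + 1) (l : ℤ), padicValInt 2 (n + j)

/-- For odd `l`, the 2-adic valuation of `C_{l,m} = A_{l, l + 2(m-1)}`. -/
noncomputable def nuC (l m : ℕ) : ℕ := nuA l ((l : ℤ) + 2 * ((m : ℤ) - 1))

noncomputable def Ffac (n : ℕ) : ℕ := padicValNat 2 (n.factorial)

lemma Ffac_zero : Ffac 0 = 0 := by simp [Ffac]

lemma Ffac_succ (n : ℕ) : Ffac (n+1) = Ffac n + padicValNat 2 (n+1) := by
  unfold Ffac
  rw [Nat.factorial_succ, padicValNat.mul (Nat.succ_ne_zero n) (Nat.factorial_ne_zero n)]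
  ring

lemma Ffac_sum (s : ℕ) : ∀ n : ℕ, Ffac s + ∑ i ∈ Finset.range n, padicValNat 2 (s+1+i) = Ffac (s+n) := by
  intro n
  induction n with
  | zero => simp
  | succ n ih =>
    rw [Finset.sum_range_succ, ← add_assoc, ih, show s+1+n = s+n+1 by ring,
      show s+(n+1) = (s+n)+1 by ring, Ffac_succ]

lemma sum_Icc_int (f : ℤ → ℕ) (a : ℤ) : ∀ n : ℕ,
    (∑ j ∈ Finset.Icc a (a + n - 1), f j) = ∑ i ∈ Finset.range n, f (a + i) := by
  intro n
  induction n with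
  | zero => rw [Finset.Icc_eq_empty (by omega)]; simp
  | succ n ih =>
    have hins : Finset.Icc a (a + (n+1:ℕ) - 1) = insert (a + (n:ℕ)) (Finset.Icc a (a + n - 1)) := by
      ext x
      simp only [Finset.mem_Icc, Finset.mem_insert]
      push_cast
      omega
    rw [hins, Finset.sum_insert (by simp only [Finset.mem_Icc, not_and, not_le]; intro _; omega), ih,
      Finset.sum_range_succ]
    ring

lemma nuC_eq (l M : ℕ) (hM : 1 ≤ M) :
    nuC l M = l + ∑ i ∈ Finset.range (2*l), padicValNat 2 (2*M - 1 + i) := by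
  unfold nuC nuA
  congr 1
  have h := sum_Icc_int (fun j => padicValInt 2 ((l : ℤ) + 2 * ((M : ℤ) - 1) + j)) (-(l:ℤ)+1) (2*l)
  have hend : (-(l:ℤ)+1) + ((2*l : ℕ) : ℤ) - 1 = (l:ℤ) := by push_cast; ring
  rw [hend] at h
  rw [h]
  refine Finset.sum_congr rfl fun i hi => ?_
  have : (l:ℤ) + 2*((M:ℤ)-1) + (-(l:ℤ)+1+(i:ℤ)) = ((2*M - 1 + i : ℕ) : ℤ) := by
    omega
  rw [this, padicValInt.of_nat]

lemma Ffac_two_mul (n : ℕ) : Ffac (2*n) = Ffac n + n := padicValNat_factorial_mul n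

lemma val_odd (n : ℕ) : padicValNat 2 (2*n+1) = 0 := by
  apply padicValNat.eq_zero_of_not_dvd
  omega

lemma Ffac_odd (n : ℕ) : Ffac (2*n+1) = Ffac n + n := by
  rw [Ffac_succ, val_odd, add_zero, Ffac_two_mul]

def s2 (n : ℕ) : ℕ := (Nat.digits 2 n).sum

lemma s2_step (n : ℕ) : s2 n = n % 2 + s2 (n/2) := by
  rcases Nat.eq_zero_or_pos n with h | h
  · simp [h, s2]
  · unfold s2
    rw [Nat.digits_def' (by norm_num : 1 < 2) h]
    simp

lemma s2_le (n : ℕ) : s2 n ≤ n := Nat.digit_sum_le 2 n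

lemma s2_compl : ∀ k x : ℕ, x < 2^k → s2 x + s2 (2^k - 1 - x) = k := by
  intro k
  induction k with
  | zero => intro x hx; interval_cases x; simp [s2]
  | succ k ih =>
    intro x hx
    have h2 : (2:ℕ)^(k+1) = 2*2^k := by ring
    have hx2 : x / 2 < 2^k := by omega
    have key := ih (x/2) hx2
    rw [s2_step x, s2_step (2^(k+1) - 1 - x)]
    have hq : (2^(k+1) - 1 - x) / 2 = 2^k - 1 - x/2 := by omega
    have hm : (2^(k+1) - 1 - x) % 2 + x % 2 = 1 := by omega
    rw [hq]
    omega

lemma Ffac_eq (n : ℕ) : Ffac n = n - s2 n := by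
  have := sub_one_mul_padicValNat_factorial (p := 2) n
  simpa [Ffac, s2] using this

lemma Ffac_compl (k a : ℕ) (h1 : 1 ≤ a) (h2 : a ≤ 2^k) :
    Ffac (a-1) + Ffac (2^k - a) = Ffac (2^k - 1) := by
  have hb : (1:ℕ) ≤ 2^k := Nat.one_le_two_pow
  have hc := s2_compl k (a-1) (by omega)
  have hc0 := s2_compl k 0 (by omega)
  have e1 : 2^k - 1 - (a-1) = 2^k - a := by omega
  have e2 : (2:ℕ)^k - 1 - 0 = 2^k - 1 := by omega
  rw [e1] at hc
  rw [e2] at hc0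
  have h0 : s2 0 = 0 := by simp [s2]
  rw [Ffac_eq, Ffac_eq, Ffac_eq]
  have l1 := s2_le (a-1)
  have l2 := s2_le (2^k - a)
  omega

lemma val_mul_pow_add (k q r : ℕ) (h0 : 0 < r) (h1 : r < 2^k) :
    padicValNat 2 (2^k*q + r) = padicValNat 2 r := by
  set v := padicValNat 2 r with hv
  have hvd : 2^v ∣ r := pow_padicValNat_dvd
  have hvk : v < k := (Nat.pow_lt_pow_iff_right (a := 2) (by norm_num)).mp
    (lt_of_le_of_lt (Nat.le_of_dvd h0 hvd) h1)
  have hne : 2^k*q + r ≠ 0 := by positivity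
  apply le_antisymm
  · by_contra hlt
    push_neg at hlt
    have hd : 2^(v+1) ∣ 2^k*q + r := (padicValNat_dvd_iff_le hne).mpr hlt
    have hd2 : 2^(v+1) ∣ 2^k*q := Dvd.dvd.mul_right (pow_dvd_pow 2 (by omega)) q
    exact pow_succ_padicValNat_not_dvd h0.ne' ((Nat.dvd_add_right hd2).mp hd)
  · apply (padicValNat_dvd_iff_le hne).mp
    exact Dvd.dvd.add (Dvd.dvd.mul_right (pow_dvd_pow 2 hvk.le) q) hvd

lemma main_nat (l k a m : ℕ) (hlo : 2^k < l) (ha1 : 1 ≤ a) (ha2 : a + l ≤ 2*2^k)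
    (hm : 1 ≤ m) :
    nuC l (2^k*(m-1)+a) = padicValNat 2 m + l + k + 1
      + Ffac (2*2^k+1-2*a) + Ffac (2*(l+a-1-2^k)) := by
  have hval : ∀ q r : ℕ, 0 < r → r < 2^k → padicValNat 2 (2^k*q+r) = padicValNat 2 r :=
    fun q r h0 h1 => val_mul_pow_add k q r h0 h1
  have hprime : padicValNat 2 (2^k) = k := padicValNat.prime_pow k
  have hcompl0 : ∀ a' : ℕ, 1 ≤ a' → a' ≤ 2^k → Ffac (a'-1) + Ffac (2^k-a') = Ffac (2^k-1) :=
    fun a' h1 h2 => Ffac_compl k a' h1 h2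
  have hb0 : 1 ≤ 2^k := Nat.one_le_two_pow
  generalize hB : 2^k = b
  rw [hB] at hval hprime hcompl0 hb0 hlo ha2
  have hb : 1 ≤ b := hb0
  have hab : a < b := by omega
  set M := b*(m-1)+a with hMdef
  have hM : 1 ≤ M := by omega
  set i0 := b - a with hi0def
  have hi0l : i0 + 1 ≤ l := by omega
  have hmul : b*(m-1) + b = b*m := by
    rw [← Nat.mul_succ]; congr 1; omega
  have hMi0 : M + i0 = b * m := by omega
  -- step 1 : nuC
  rw [nuC_eq l M hM]
  -- step 2: big interval to factorials
  have h2 := Ffac_sum (2*(M-1)) (2*l)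
  rw [Finset.sum_congr rfl (fun i _ => congrArg (padicValNat 2)
    (by omega : 2*(M-1)+1+i = 2*M-1+i))] at h2
  -- step 3: halving
  have h3a : Ffac (2*(M-1)) = Ffac (M-1) + (M-1) := Ffac_two_mul (M-1)
  have h3b : Ffac (2*(M-1) + 2*l) = Ffac (M-1+l) + (M-1+l) := by
    rw [show 2*(M-1)+2*l = 2*(M-1+l) by ring, Ffac_two_mul]
  -- step 4: small interval
  have h4 := Ffac_sum (M-1) l
  rw [Finset.sum_congr rfl (fun i _ => congrArg (padicValNat 2)
    (by omega : M-1+1+i = M+i))] at h4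
  -- step 5: split the small interval at i0
  have hsplit : ∑ i ∈ Finset.range l, padicValNat 2 (M+i)
      = (∑ i ∈ Finset.range i0, padicValNat 2 (M+i)) + padicValNat 2 (M+i0)
        + ∑ i ∈ Finset.Ico (i0+1) l, padicValNat 2 (M+i) := by
    rw [Finset.range_eq_Ico, ← Finset.sum_Ico_consecutive _ (Nat.zero_le (i0+1)) hi0l,
      Finset.sum_Ico_succ_top (Nat.zero_le i0), ← Finset.range_eq_Ico]
  -- middle term
  have hmid : padicValNat 2 (M+i0) = k + padicValNat 2 m := by
    rw [hMi0, padicValNat.mul (by omega) (by omega), hprime]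
  -- left part
  have hleft : ∑ i ∈ Finset.range i0, padicValNat 2 (M+i)
      = ∑ i ∈ Finset.range i0, padicValNat 2 (a-1+1+i) := by
    refine Finset.sum_congr rfl fun i hi => ?_
    rw [Finset.mem_range] at hi
    rw [show M + i = b*(m-1) + (a+i) by omega,
      hval (m-1) (a+i) (by omega) (by omega)]
    congr 1
    omega
  have hleft2 := Ffac_sum (a-1) i0
  have hleft3 : a-1+i0 = b-1 := by omega
  rw [hleft3] at hleft2
  -- right part
  have hright : ∑ i ∈ Finset.Ico (i0+1) l, padicValNat 2 (M+i)
      = ∑ t ∈ Finset.range (l-(i0+1)), padicValNat 2 (1+t) := by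
    rw [Finset.sum_Ico_eq_sum_range]
    refine Finset.sum_congr rfl fun t ht => ?_
    rw [Finset.mem_range] at ht
    rw [show M + (i0+1+t) = b*m + (1+t) by omega,
      hval m (1+t) (by omega) (by omega)]
  have hright2 := Ffac_sum 0 (l-(i0+1))
  rw [Ffac_zero] at hright2
  simp only [zero_add] at hright2
  -- complement identity
  have hcompl : Ffac (a-1) + Ffac (b-a) = Ffac (b-1) := hcompl0 a ha1 (by omega)
  -- target factorials
  have ht1 : Ffac (2*b+1-2*a) = Ffac (b-a) + (b-a) := by
    rw [show 2*b+1-2*a = 2*(b-a)+1 by omega, Ffac_odd]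
  have ht2 : Ffac (2*(l+a-1-b)) = Ffac (l+a-1-b) + (l+a-1-b) := Ffac_two_mul _
  have hre : l - (i0+1) = l+a-1-b := by omega
  rw [hre] at hright hright2
  rw [hsplit, hmid, hleft, hright] at h4
  omega

theorem nuC_terminal_first (l k : ℕ) (hl : Odd l) (hlo : 2 ^ k < l) (hhi : l < 2 ^ (k + 1))
    (a : ℕ) (ha1 : 1 ≤ a) (ha2 : a ≤ 2 ^ (k + 1) - l) (m : ℕ) (hm : 1 ≤ m) :
    (nuC l (2 ^ k * (m - 1) + a) : ℤ) =
      (padicValNat 2 m : ℤ) + l + k + 1 +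
        (padicValNat 2 ((-(l : ℤ) + 2 * (1 + 2 ^ k - (a : ℤ)) + l - 1).toNat.factorial) : ℤ) +
        (padicValNat 2 (((l : ℤ) - (-(l : ℤ) + 2 * (1 + 2 ^ k - (a : ℤ)))).toNat.factorial) : ℤ) := by
  have h2b : (2:ℕ)^(k+1) = 2*2^k := by ring
  have hab2 : a + l ≤ 2*2^k := by omega
  have hab : a ≤ 2^k := by omega
  have hmain := main_nat l k a m hlo ha1 hab2 hm
  have hc : ((2^k : ℕ) : ℤ) = (2:ℤ)^k := by push_cast; ring
  have hT1 : (-(l : ℤ) + 2 * (1 + 2 ^ k - (a : ℤ)) + l - 1).toNat = 2*2^k+1-2*a := by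
    omega
  have hT2 : ((l : ℤ) - (-(l : ℤ) + 2 * (1 + 2 ^ k - (a : ℤ)))).toNat = 2*(l+a-1-2^k) := by
    omega
  simp only [Ffac] at hmain
  rw [hT1, hT2, hmain]
  push_cast
  ring
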